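/- The series ∑_{m=1}^∞ H_{m−1}/m⁴ converges and equals 2 ζ(5) − ζ(2) ζ(3). -/

import Mathlib

/-- `ζ(s) = ∑_{n≥1} n^{-s}` for real `s`. -/
noncomputable def zetaR (s : ℝ) : ℝ := ∑' n : ℕ, 1 / ((n : ℝ) + 1) ^ s

/-- `H_M = ∑_{k=1}^M 1/k`, with `H_0 = 0`. -/
noncomputable def harmonicR (M : ℕ) : ℝ := ∑ k ∈ Finset.range M, 1 / ((k : ℝ) + 1)

open Finset Filter Function

namespace EulerAux

lemma summable_shift (s : ℕ) (hs : 2 ≤ s) : Summable (fun n : ℕ => 1 / ((n : ℝ) + 1) ^ s) := by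
  have h0 : Summable (fun n : ℕ => 1 / (n : ℝ) ^ s) := Real.summable_one_div_nat_pow.mpr hs
  have h := (summable_nat_add_iff 1).mpr h0
  refine h.congr fun n => ?_
  push_cast
  ring


lemma le_N1 (a b : ℕ) : ((a : ℝ) + 1) ≤ (a : ℝ) + (b : ℝ) + 2 := by
  have : (0:ℝ) ≤ (b:ℝ) := Nat.cast_nonneg b
  linarith

lemma le_N2 (a b : ℕ) : ((b : ℝ) + 1) ≤ (a : ℝ) + (b : ℝ) + 2 := by
  have : (0:ℝ) ≤ (a:ℝ) := Nat.cast_nonneg a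
  linarith

/-- the five double-sum term functions; `p.1+1 = j`, `p.1+p.2+2 = n`, `p.2+1 = n - j`. -/
noncomputable def G1 (p : ℕ × ℕ) : ℝ := 1 / (((p.1 : ℝ) + 1) * ((p.1 : ℝ) + (p.2 : ℝ) + 2) ^ 4)
noncomputable def G2 (p : ℕ × ℕ) : ℝ := 1 / (((p.1 : ℝ) + 1) ^ 2 * ((p.1 : ℝ) + (p.2 : ℝ) + 2) ^ 3)
noncomputable def G3 (p : ℕ × ℕ) : ℝ := 1 / (((p.1 : ℝ) + 1) ^ 3 * ((p.1 : ℝ) + (p.2 : ℝ) + 2) ^ 2)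
noncomputable def G4 (p : ℕ × ℕ) : ℝ := 1 / (((p.2 : ℝ) + 1) * ((p.1 : ℝ) + (p.2 : ℝ) + 2) ^ 4)
noncomputable def G5 (p : ℕ × ℕ) : ℝ :=
  1 / (((p.2 : ℝ) + 1) * ((p.1 : ℝ) + (p.2 : ℝ) + 2) * ((p.1 : ℝ) + 1) ^ 3)

lemma summable_pp (s t : ℕ) (hs : 2 ≤ s) (ht : 2 ≤ t) :
    Summable (fun p : ℕ × ℕ => 1 / ((p.1 : ℝ) + 1) ^ s * (1 / ((p.2 : ℝ) + 1) ^ t)) :=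
  (summable_shift s hs).mul_of_nonneg (summable_shift t ht)
    (fun n => by positivity) (fun n => by positivity)

lemma summable_G1 : Summable G1 := by
  refine Summable.of_nonneg_of_le (fun p => by unfold G1; positivity) ?_
    (summable_pp 2 3 le_rfl (by norm_num))
  rintro ⟨a, b⟩
  unfold G1
  rw [one_div_mul_one_div]
  refine one_div_le_one_div_of_le (by positivity) ?_
  have h1 := le_N1 a b
  have h2 := le_N2 a b
  calc ((a : ℝ) + 1) ^ 2 * ((b : ℝ) + 1) ^ 3
      = ((a : ℝ) + 1) * (((a : ℝ)+1) * ((b : ℝ)+1) * ((b : ℝ)+1) * ((b : ℝ)+1)) := by ring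
    _ ≤ ((a : ℝ) + 1) * (((a : ℝ)+(b : ℝ)+2) * ((a : ℝ)+(b : ℝ)+2) * ((a : ℝ)+(b : ℝ)+2)
          * ((a : ℝ)+(b : ℝ)+2)) := by gcongr <;> positivity
    _ = ((a : ℝ) + 1) * ((a : ℝ) + (b : ℝ) + 2) ^ 4 := by ring

lemma summable_G2 : Summable G2 := by
  refine Summable.of_nonneg_of_le (fun p => by unfold G2; positivity) ?_
    (summable_pp 2 3 le_rfl (by norm_num))
  rintro ⟨a, b⟩
  unfold G2
  rw [one_div_mul_one_div]
  refine one_div_le_one_div_of_le (by positivity) ?_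
  have h2 := le_N2 a b
  gcongr <;> positivity

lemma summable_G3 : Summable G3 := by
  refine Summable.of_nonneg_of_le (fun p => by unfold G3; positivity) ?_
    (summable_pp 3 2 (by norm_num) le_rfl)
  rintro ⟨a, b⟩
  unfold G3
  rw [one_div_mul_one_div]
  refine one_div_le_one_div_of_le (by positivity) ?_
  have h2 := le_N2 a b
  gcongr <;> positivity

lemma summable_G4 : Summable G4 := by
  refine Summable.of_nonneg_of_le (fun p => by unfold G4; positivity) ?_
    (summable_pp 3 2 (by norm_num) le_rfl)
  rintro ⟨a, b⟩
  unfold G4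
  rw [one_div_mul_one_div]
  refine one_div_le_one_div_of_le (by positivity) ?_
  have h1 := le_N1 a b
  have h2 := le_N2 a b
  calc ((a : ℝ) + 1) ^ 3 * ((b : ℝ) + 1) ^ 2
      = ((b : ℝ) + 1) * (((a : ℝ)+1) * ((a : ℝ)+1) * ((a : ℝ)+1) * ((b : ℝ)+1)) := by ring
    _ ≤ ((b : ℝ) + 1) * (((a : ℝ)+(b : ℝ)+2) * ((a : ℝ)+(b : ℝ)+2) * ((a : ℝ)+(b : ℝ)+2)
          * ((a : ℝ)+(b : ℝ)+2)) := by gcongr <;> positivity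
    _ = ((b : ℝ) + 1) * ((a : ℝ) + (b : ℝ) + 2) ^ 4 := by ring

lemma summable_G5 : Summable G5 := by
  refine Summable.of_nonneg_of_le (fun p => by unfold G5; positivity) ?_
    (summable_pp 3 2 (by norm_num) le_rfl)
  rintro ⟨a, b⟩
  unfold G5
  rw [one_div_mul_one_div]
  refine one_div_le_one_div_of_le (by positivity) ?_
  have h2 := le_N2 a b
  calc ((a : ℝ) + 1) ^ 3 * ((b : ℝ) + 1) ^ 2
      = ((b : ℝ) + 1) * ((b : ℝ) + 1) * ((a : ℝ) + 1) ^ 3 := by ring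
    _ ≤ ((b : ℝ) + 1) * ((a : ℝ) + (b : ℝ) + 2) * ((a : ℝ) + 1) ^ 3 := by gcongr
    _ = ((b : ℝ) + 1) * ((a : ℝ) + (b : ℝ) + 2) * ((a : ℝ) + 1) ^ 3 := rfl


lemma harmonic_succ (m : ℕ) : harmonicR (m + 1) = harmonicR m + 1 / ((m : ℝ) + 1) :=
  Finset.sum_range_succ _ m

lemma harmonic_add (j B : ℕ) :
    harmonicR (j + B) = harmonicR j + ∑ b ∈ range B, 1 / (((j : ℝ) + (b : ℝ)) + 1) := by
  unfold harmonicR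
  rw [Finset.sum_range_add]
  congr 1
  refine Finset.sum_congr rfl fun b _ => ?_
  push_cast
  ring

lemma harmonic_diff_le (j B : ℕ) :
    harmonicR (j + B) - harmonicR B ≤ (j : ℝ) / ((B : ℝ) + 1) := by
  have h : harmonicR (B + j) = harmonicR B + ∑ b ∈ range j, 1 / (((B : ℝ) + (b : ℝ)) + 1) :=
    harmonic_add B j
  rw [Nat.add_comm j B, h]
  have hb : ∑ b ∈ range j, 1 / (((B : ℝ) + (b : ℝ)) + 1) ≤ ∑ _b ∈ range j, 1 / ((B : ℝ) + 1) := by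
    refine Finset.sum_le_sum fun b _ => ?_
    refine one_div_le_one_div_of_le (by positivity) ?_
    have : (0:ℝ) ≤ (b:ℝ) := Nat.cast_nonneg b
    linarith
  have hc : ∑ _b ∈ range j, 1 / ((B : ℝ) + 1) = (j : ℝ) / ((B : ℝ) + 1) := by
    rw [Finset.sum_const, Finset.card_range]
    simp [nsmul_eq_mul]
    ring
  rw [hc] at hb
  linarith

lemma harmonic_mono : Monotone harmonicR := by
  intro x y hxy
  unfold harmonicR
  exact Finset.sum_le_sum_of_subset_of_nonneg (Finset.range_subset_range.mpr hxy)
    (fun i _ _ => by positivity)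

lemma tendsto_harmonic_diff (j : ℕ) :
    Tendsto (fun B : ℕ => harmonicR (j + B) - harmonicR B) atTop (nhds 0) := by
  have hupper : Tendsto (fun B : ℕ => (j : ℝ) / ((B : ℝ) + 1)) atTop (nhds 0) := by
    have := tendsto_one_div_add_atTop_nhds_zero_nat.const_mul (j : ℝ)
    simpa [mul_one_div, mul_zero, div_eq_mul_inv] using this
  refine squeeze_zero (fun B => ?_) (fun B => harmonic_diff_le j B) hupper
  have := harmonic_mono (Nat.le_add_left B j)
  linarith

/-- telescoping: `∑_{k≥1} 1/(k(k+j)) = H_j / j` with `j = a+1`. -/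
lemma hasSum_telescope (a : ℕ) :
    HasSum (fun b : ℕ => 1 / (((b : ℝ) + 1) * ((a : ℝ) + (b : ℝ) + 2)))
      (harmonicR (a + 1) / ((a : ℝ) + 1)) := by
  rw [hasSum_iff_tendsto_nat_of_nonneg (fun b => by positivity)]
  have key : ∀ B : ℕ, ∑ b ∈ range B, 1 / (((b : ℝ) + 1) * ((a : ℝ) + (b : ℝ) + 2))
      = (harmonicR (a + 1) - (harmonicR ((a + 1) + B) - harmonicR B)) / ((a : ℝ) + 1) := by
    intro B
    have hpt : ∀ b : ℕ, 1 / (((b : ℝ) + 1) * ((a : ℝ) + (b : ℝ) + 2))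
        = (1 / ((b : ℝ) + 1) - 1 / (((a : ℝ) + 1 + (b : ℝ)) + 1)) / ((a : ℝ) + 1) := by
      intro b
      have hb : (0:ℝ) ≤ (b:ℝ) := Nat.cast_nonneg b
      have ha : (0:ℝ) ≤ (a:ℝ) := Nat.cast_nonneg a
      rw [div_sub_div _ _ (by positivity) (by positivity), div_div]
      rw [div_eq_div_iff (by positivity) (by positivity)]
      ring
    rw [Finset.sum_congr rfl (fun b _ => hpt b), ← Finset.sum_div, Finset.sum_sub_distrib]
    have h1 : ∑ b ∈ range B, 1 / ((b : ℝ) + 1) = harmonicR B := rfl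
    have h2 : ∑ b ∈ range B, 1 / (((a : ℝ) + 1 + (b : ℝ)) + 1)
        = harmonicR ((a + 1) + B) - harmonicR (a + 1) := by
      have := harmonic_add (a + 1) B
      push_cast at this
      rw [this]
      ring
    rw [h1, h2]
    ring_nf
  rw [show (fun B : ℕ => ∑ b ∈ range B, 1 / (((b : ℝ) + 1) * ((a : ℝ) + (b : ℝ) + 2))) = fun B =>
    (harmonicR (a + 1) - (harmonicR ((a + 1) + B) - harmonicR B)) / ((a : ℝ) + 1) from funext key]
  have := (tendsto_harmonic_diff (a + 1)).const_sub (harmonicR (a + 1))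
  have h2 := this.div_const ((a : ℝ) + 1)
  simpa using h2


/-! ### Step A: the target sequence has sum `∑' G1` -/

noncomputable def F' (p : ℕ × ℕ) : ℝ :=
  if p.2 < p.1 then 1 / (((p.2 : ℝ) + 1) * ((p.1 : ℝ) + 1) ^ 4) else 0

def eA (q : ℕ × ℕ) : ℕ × ℕ := (q.1 + q.2 + 1, q.1)

lemma eA_inj : Injective eA := by
  rintro ⟨a, b⟩ ⟨c, d⟩ h
  simp only [eA, Prod.mk.injEq] at h
  obtain ⟨h1, h2⟩ := h
  simp only [Prod.mk.injEq]
  omega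

lemma F'_vanish : ∀ p ∉ Set.range eA, F' p = 0 := by
  rintro ⟨m, k⟩ hp
  by_contra h
  apply hp
  have hk : k < m := by
    by_contra hk
    exact h (if_neg hk)
  exact ⟨(k, m - k - 1), by simp only [eA, Prod.mk.injEq, and_true]; omega⟩

lemma F'_comp_eA : F' ∘ eA = G1 := by
  funext q
  obtain ⟨a, b⟩ := q
  simp only [F', eA, comp_apply]
  simp only [show a < a + b + 1 by omega, ↓reduceIte]
  unfold G1
  push_cast
  ring_nf

lemma hasSum_main : HasSum (fun m : ℕ => harmonicR m / ((m : ℝ) + 1) ^ 4) (∑' p, G1 p) := by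
  have hG1 : HasSum G1 (∑' p, G1 p) := summable_G1.hasSum
  have hF' : HasSum F' (∑' p, G1 p) :=
    (eA_inj.hasSum_iff F'_vanish).mp (by rw [F'_comp_eA]; exact hG1)
  refine hF'.prod_fiberwise fun m => ?_
  have h0 : ∀ k ∉ range m, F' (m, k) = 0 := by
    intro k hk
    simp only [F']
    rw [if_neg]
    simpa using hk
  have hsum := hasSum_sum_of_ne_finset_zero (L := SummationFilter.unconditional ℕ) h0
  convert hsum using 1
  unfold harmonicR
  rw [Finset.sum_div]
  refine Finset.sum_congr rfl fun k hk => ?_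
  simp only [F']
  rw [if_pos (Finset.mem_range.mp hk), div_div]

/-! ### G5 fiberwise -/

lemma hasSum_G5_fiber (a : ℕ) :
    HasSum (fun b : ℕ => G5 (a, b)) (harmonicR (a + 1) / ((a : ℝ) + 1) ^ 4) := by
  have h := (hasSum_telescope a).mul_left (1 / ((a : ℝ) + 1) ^ 3)
  have hval : 1 / ((a : ℝ) + 1) ^ 3 * (harmonicR (a + 1) / ((a : ℝ) + 1))
      = harmonicR (a + 1) / ((a : ℝ) + 1) ^ 4 := by
    rw [div_mul_div_comm, one_mul, ← pow_succ]
  rw [hval] at h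
  refine HasSum.congr_fun h fun b => ?_
  unfold G5
  rw [one_div_mul_one_div]
  congr 1
  ring

lemma tsum_G5 : ∑' p, G5 p
    = (∑' m : ℕ, harmonicR m / ((m : ℝ) + 1) ^ 4) + ∑' n : ℕ, 1 / ((n : ℝ) + 1) ^ 5 := by
  rw [Summable.tsum_prod' summable_G5 fun a => (hasSum_G5_fiber a).summable]
  have h1 : ∀ a : ℕ, ∑' b, G5 (a, b) = harmonicR (a + 1) / ((a : ℝ) + 1) ^ 4 :=
    fun a => (hasSum_G5_fiber a).tsum_eq
  rw [tsum_congr h1]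
  have h2 : ∀ a : ℕ, harmonicR (a + 1) / ((a : ℝ) + 1) ^ 4
      = harmonicR a / ((a : ℝ) + 1) ^ 4 + 1 / ((a : ℝ) + 1) ^ 5 := by
    intro a
    rw [harmonic_succ]
    have ha : ((a : ℝ) + 1) ≠ 0 := by positivity
    field_simp
  rw [tsum_congr h2, Summable.tsum_add hasSum_main.summable (summable_shift 5 (by norm_num))]

/-! ### swap -/

lemma tsum_G4 : ∑' p, G4 p = ∑' p, G1 p := by
  have hc : G1 ∘ (Equiv.prodComm ℕ ℕ) = G4 := by
    funext q
    obtain ⟨a, b⟩ := q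
    simp only [G1, G4, comp_apply, Equiv.prodComm_apply, Prod.swap_prod_mk]
    congr 1
    ring
  rw [← hc]
  exact (Equiv.prodComm ℕ ℕ).tsum_eq G1

/-! ### sum rule -/

lemma sum_rule : (∑' p, G1 p) + (∑' p, G2 p) + (∑' p, G3 p) + (∑' p, G4 p) = ∑' p, G5 p := by
  have h : HasSum (fun p => G1 p + G2 p + G3 p + G4 p)
      ((∑' p, G1 p) + (∑' p, G2 p) + (∑' p, G3 p) + (∑' p, G4 p)) :=
    ((summable_G1.hasSum.add summable_G2.hasSum).add summable_G3.hasSum).add summable_G4.hasSum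
  have hpt : ∀ p : ℕ × ℕ, G5 p = G1 p + G2 p + G3 p + G4 p := by
    rintro ⟨a, b⟩
    unfold G1 G2 G3 G4 G5
    have ha : (0:ℝ) ≤ (a : ℝ) := Nat.cast_nonneg a
    have hb : (0:ℝ) ≤ (b : ℝ) := Nat.cast_nonneg b
    have h1 : ((a : ℝ) + 1) ≠ 0 := by positivity
    have h2 : ((b : ℝ) + 1) ≠ 0 := by positivity
    have h3 : ((a : ℝ) + (b : ℝ) + 2) ≠ 0 := by positivity
    field_simp
    ring
  exact (summable_G5.hasSum.unique (HasSum.congr_fun h hpt)).symm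

/-! ### stuffle -/

noncomputable def hh (p : ℕ × ℕ) : ℝ := 1 / ((p.1 : ℝ) + 1) ^ 2 * (1 / ((p.2 : ℝ) + 1) ^ 3)

noncomputable def P1 (p : ℕ × ℕ) : ℝ := if p.1 < p.2 then hh p else 0
noncomputable def P2 (p : ℕ × ℕ) : ℝ := if p.1 = p.2 then hh p else 0
noncomputable def P3 (p : ℕ × ℕ) : ℝ := if p.2 < p.1 then hh p else 0

lemma summable_hh : Summable hh := summable_pp 2 3 le_rfl (by norm_num)

lemma hh_nonneg (p : ℕ × ℕ) : 0 ≤ hh p := by unfold hh; positivity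

lemma summable_P : Summable P1 ∧ Summable P2 ∧ Summable P3 := by
  refine ⟨?_, ?_, ?_⟩ <;>
  · refine Summable.of_nonneg_of_le (fun p => ?_) (fun p => ?_) summable_hh <;>
      simp only [P1, P2, P3] <;> split_ifs <;>
      first | exact le_rfl | exact hh_nonneg p

lemma hh_split (p : ℕ × ℕ) : hh p = P1 p + P2 p + P3 p := by
  simp only [P1, P2, P3]
  rcases lt_trichotomy p.1 p.2 with h | h | h
  · rw [if_pos h, if_neg (by omega), if_neg (by omega)]; ring
  · rw [if_neg (by omega), if_pos h, if_neg (by omega)]; ring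
  · rw [if_neg (by omega), if_neg (by omega), if_pos h]; ring

def e1 (q : ℕ × ℕ) : ℕ × ℕ := (q.1, q.1 + q.2 + 1)
def e3 (q : ℕ × ℕ) : ℕ × ℕ := (q.1 + q.2 + 1, q.1)
def e2 (d : ℕ) : ℕ × ℕ := (d, d)

lemma tsum_P1 : ∑' p, P1 p = ∑' p, G2 p := by
  have hinj : Injective e1 := by
    rintro ⟨a, b⟩ ⟨c, d⟩ h
    simp only [e1, Prod.mk.injEq] at h ⊢
    omega
  have hvan : ∀ p ∉ Set.range e1, P1 p = 0 := by
    rintro ⟨i, j⟩ hp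
    by_contra h
    apply hp
    have hij : i < j := by
      by_contra hij
      exact h (if_neg hij)
    exact ⟨(i, j - i - 1), by simp only [e1, Prod.mk.injEq, true_and, and_true]; omega⟩
  have hcomp : P1 ∘ e1 = G2 := by
    funext q
    obtain ⟨a, b⟩ := q
    simp only [P1, e1, comp_apply, hh]
    simp only [show a < a + b + 1 by omega, ↓reduceIte]
    unfold G2
    rw [one_div_mul_one_div]
    congr 1
    push_cast
    ring
  have := (hinj.hasSum_iff hvan).mp (by rw [hcomp]; exact summable_G2.hasSum)
  exact this.tsum_eq

lemma tsum_P3 : ∑' p, P3 p = ∑' p, G3 p := by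
  have hinj : Injective e3 := by
    rintro ⟨a, b⟩ ⟨c, d⟩ h
    simp only [e3, Prod.mk.injEq] at h ⊢
    omega
  have hvan : ∀ p ∉ Set.range e3, P3 p = 0 := by
    rintro ⟨i, j⟩ hp
    by_contra h
    apply hp
    have hij : j < i := by
      by_contra hij
      exact h (if_neg hij)
    exact ⟨(j, i - j - 1), by simp only [e3, Prod.mk.injEq, true_and, and_true]; omega⟩
  have hcomp : P3 ∘ e3 = G3 := by
    funext q
    obtain ⟨a, b⟩ := q
    simp only [P3, e3, comp_apply, hh]
    simp only [show a < a + b + 1 by omega, ↓reduceIte]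
    unfold G3
    rw [one_div_mul_one_div]
    congr 1
    push_cast
    ring
  have := (hinj.hasSum_iff hvan).mp (by rw [hcomp]; exact summable_G3.hasSum)
  exact this.tsum_eq

lemma tsum_P2 : ∑' p, P2 p = ∑' n : ℕ, 1 / ((n : ℝ) + 1) ^ 5 := by
  have hinj : Injective e2 := by
    intro a b h
    simpa [e2, Prod.mk.injEq] using h
  have hvan : ∀ p ∉ Set.range e2, P2 p = 0 := by
    rintro ⟨i, j⟩ hp
    by_contra h
    apply hp
    have hij : i = j := by
      by_contra hij
      exact h (if_neg hij)
    exact ⟨i, by simp only [e2, Prod.mk.injEq, true_and, and_true]; omega⟩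
  have hcomp : P2 ∘ e2 = fun n : ℕ => 1 / ((n : ℝ) + 1) ^ 5 := by
    funext d
    simp only [P2, e2, comp_apply, hh]
    rw [if_true, one_div_mul_one_div]
    congr 1
    ring
  have := (hinj.hasSum_iff hvan).mp
    (by rw [hcomp]; exact (summable_shift 5 (by norm_num)).hasSum)
  exact this.tsum_eq

set_option maxHeartbeats 1000000 in
lemma stuffle : (∑' n : ℕ, 1 / ((n : ℝ) + 1) ^ 2) * (∑' n : ℕ, 1 / ((n : ℝ) + 1) ^ 3)
    = (∑' p, G2 p) + (∑' n : ℕ, 1 / ((n : ℝ) + 1) ^ 5) + ∑' p, G3 p := by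
  obtain ⟨s1, s2, s3⟩ := summable_P
  have hmul0 : HasSum (fun p : ℕ × ℕ => 1 / ((p.1 : ℝ) + 1) ^ 2 * (1 / ((p.2 : ℝ) + 1) ^ 3))
      ((∑' n : ℕ, 1 / ((n : ℝ) + 1) ^ 2) * ∑' n : ℕ, 1 / ((n : ℝ) + 1) ^ 3) :=
    HasSum.mul (summable_shift 2 le_rfl).hasSum (summable_shift 3 (by norm_num)).hasSum
      (summable_pp 2 3 le_rfl (by norm_num))
  have hmul : HasSum hh ((∑' n : ℕ, 1 / ((n : ℝ) + 1) ^ 2) * ∑' n : ℕ, 1 / ((n : ℝ) + 1) ^ 3) :=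
    hmul0
  have hsplit : HasSum hh ((∑' p, P1 p) + (∑' p, P2 p) + ∑' p, P3 p) :=
    HasSum.congr_fun ((s1.hasSum.add s2.hasSum).add s3.hasSum) hh_split
  rw [hmul.unique hsplit, tsum_P1, tsum_P2, tsum_P3]

lemma zetaR_nat (s : ℕ) : zetaR (s : ℝ) = ∑' n : ℕ, 1 / ((n : ℝ) + 1) ^ s := by
  unfold zetaR
  refine tsum_congr fun n => ?_
  rw [Real.rpow_natCast]

lemma zetaR_two : zetaR 2 = ∑' n : ℕ, 1 / ((n : ℝ) + 1) ^ (2 : ℕ) := by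
  rw [show (2 : ℝ) = ((2 : ℕ) : ℝ) by norm_num, zetaR_nat]

lemma zetaR_three : zetaR 3 = ∑' n : ℕ, 1 / ((n : ℝ) + 1) ^ (3 : ℕ) := by
  rw [show (3 : ℝ) = ((3 : ℕ) : ℝ) by norm_num, zetaR_nat]

lemma zetaR_five : zetaR 5 = ∑' n : ℕ, 1 / ((n : ℝ) + 1) ^ (5 : ℕ) := by
  rw [show (5 : ℝ) = ((5 : ℕ) : ℝ) by norm_num, zetaR_nat]

end EulerAux


/-- Euler sum: `∑_{m≥1} H_{m-1}/m⁴ = 2ζ(5) − ζ(2)ζ(3)`. -/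
theorem stmt3 :
    HasSum (fun m : ℕ => harmonicR m / ((m : ℝ) + 1) ^ 4)
      (2 * zetaR 5 - zetaR 2 * zetaR 3) := by
  have hS := EulerAux.hasSum_main
  have key : (∑' p, EulerAux.G1 p) = 2 * zetaR 5 - zetaR 2 * zetaR 3 := by
    have h1 := EulerAux.sum_rule
    have h2 := EulerAux.tsum_G4
    have h3 := EulerAux.tsum_G5
    have h4 := EulerAux.stuffle
    have h5 := hS.tsum_eq
    rw [EulerAux.zetaR_five, EulerAux.zetaR_two, EulerAux.zetaR_three]
    rw [h5] at h3
    linarith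
  rw [← key]
  exact hS
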